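/- Let b_0 = 1 and define b_i = π^{-1}(1-π^{q^i-1})^{-1} Σ_{j=1}^i b_{i-j} a_j^{q^{i-j}} for i ≥ 1, where v(a_j) ≥ q^j - 1 for all j ≥ 1 and q ≥ 3. Then v(b_i) ≥ i for all i ≥ 0. -/

import Mathlib

lemma aux_pow (q j : ℕ) (hq : 3 ≤ q) (hj : 1 ≤ j) : j + 2 ≤ q ^ j := by
  have h3 : j + 2 ≤ 3 ^ j := by
    induction j with
    | zero => omega
    | succ n ih =>
      rcases Nat.eq_zero_or_pos n with h | h
      · subst h; norm_num
      · have := ih h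
        have : 3 ^ (n + 1) = 3 * 3 ^ n := by ring
        omega
  calc j + 2 ≤ 3 ^ j := h3
    _ ≤ q ^ j := Nat.pow_le_pow_left hq j

/-- Valuation bound in theorem (pal3): over a DVR `R` with uniformizer `π` and `q ≥ 3`,
if `b₀ = 1` and `b` satisfies the recursion
`bᵢ = π⁻¹ (1 - π^(q^i - 1))⁻¹ Σ_{j=1}^{i} b_{i-j} aⱼ^(q^{i-j})`
(written multiplicatively to stay inside `R`), where `v(aⱼ) ≥ q^j - 1` for all `j ≥ 1`,
then `v(bᵢ) ≥ i` for all `i ≥ 0`. -/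
theorem stmt4 (R : Type*) [CommRing R] [IsDomain R] [IsDiscreteValuationRing R]
    (π : R) (hπ : Irreducible π) (q : ℕ) (hq : 3 ≤ q)
    (a b : ℕ → R) (hb0 : b 0 = 1)
    (ha : ∀ j, 1 ≤ j → π ^ (q ^ j - 1) ∣ a j)
    (hrec : ∀ i, 1 ≤ i →
      π * (1 - π ^ (q ^ i - 1)) * b i =
        ∑ j ∈ Finset.Icc 1 i, b (i - j) * (a j) ^ q ^ (i - j)) :
    ∀ i, π ^ i ∣ b i := by
  intro i
  induction i using Nat.strong_induction_on with
  | _ i IH =>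
    rcases Nat.eq_zero_or_pos i with h0 | hi
    · subst h0; simp
    -- the sum is divisible by π^(i+1)
    have hsum : π ^ (i + 1) ∣ ∑ j ∈ Finset.Icc 1 i, b (i - j) * (a j) ^ q ^ (i - j) := by
      apply Finset.dvd_sum
      intro j hj
      rw [Finset.mem_Icc] at hj
      obtain ⟨hj1, hji⟩ := hj
      have hb : π ^ (i - j) ∣ b (i - j) := IH (i - j) (by omega)
      have haj : π ^ ((q ^ j - 1) * q ^ (i - j)) ∣ (a j) ^ q ^ (i - j) := by
        rw [pow_mul]
        exact pow_dvd_pow_of_dvd (ha j hj1) _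
      have hdvd : π ^ ((i - j) + (q ^ j - 1) * q ^ (i - j)) ∣
          b (i - j) * (a j) ^ q ^ (i - j) := by
        rw [pow_add]; exact mul_dvd_mul hb haj
      refine (pow_dvd_pow π ?_).trans hdvd
      have h1 : j + 1 ≤ q ^ j - 1 := by
        have := aux_pow q j hq hj1; omega
      have h2 : q ^ j - 1 ≤ (q ^ j - 1) * q ^ (i - j) :=
        Nat.le_mul_of_pos_right _ (pow_pos (by omega) _)
      omega
    rw [← hrec i hi] at hsum
    have hexp : π * (1 - π ^ (q ^ i - 1)) * b i = π * b i - π ^ (q ^ i) * b i := by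
      have : (q ^ i - 1) + 1 = q ^ i := by
        have : 1 ≤ q ^ i := Nat.one_le_pow _ _ (by omega)
        omega
      calc π * (1 - π ^ (q ^ i - 1)) * b i
          = π * b i - (π ^ (q ^ i - 1) * π) * b i := by ring
        _ = π * b i - π ^ (q ^ i) * b i := by rw [← pow_succ, this]
    rw [hexp] at hsum
    have hpow : π ^ (i + 1) ∣ π ^ (q ^ i) * b i := by
      refine Dvd.dvd.mul_right (pow_dvd_pow π ?_) _
      have : i + 2 ≤ q ^ i := aux_pow q i hq hi
      omega
    have : π ^ (i + 1) ∣ π * b i := by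
      have := dvd_add hsum hpow
      simpa using this
    rw [pow_succ'] at this
    exact (mul_dvd_mul_iff_left hπ.ne_zero).mp this
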